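/- Let R be a ring and A a right ideal of R with a serial factorization. Then R/A is a Bézout right R-module, i.e., every finitely generated R-submodule of R/A is cyclic. -/

import Mathlib

open MulOpposite

universe u

/-- The product `A·B` of two right ideals of `R` (right ideals are `Rᵐᵒᵖ`-submodules of `R`):
the set of all finite sums of products `a * b` with `a ∈ A`, `b ∈ B`. -/
def rmul {R : Type u} [Ring R] (A B : Submodule Rᵐᵒᵖ R) : Submodule Rᵐᵒᵖ R :=
  Submodule.span Rᵐᵒᵖ {x : R | ∃ a ∈ A, ∃ b ∈ B, x = a * b}

/-- The product `A₁⋯Aₙ` of a (possibly empty) list of right ideals. -/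
def rprod {R : Type u} [Ring R] : List (Submodule Rᵐᵒᵖ R) → Submodule Rᵐᵒᵖ R
  | [] => ⊤
  | [A] => A
  | A :: l => rmul A (rprod l)

/-- A finite family of right ideals is coindependent if `Aᵢ + ⋂_{j ≠ i} Aⱼ = R` for every `i`. -/
def Coindep {R : Type u} [Ring R] {n : ℕ} (A : Fin n → Submodule Rᵐᵒᵖ R) : Prop :=
  ∀ i, A i ⊔ (⨅ j, ⨅ (_ : j ≠ i), A j) = ⊤

/-- A module is uniserial if its submodules are linearly ordered by inclusion. -/
def IsUniserialMod (S : Type*) [Ring S] (M : Type*) [AddCommGroup M] [Module S M] : Prop :=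
  ∀ N P : Submodule S M, N ≤ P ∨ P ≤ N

/-- A right ideal is a two-sided ideal if it is also closed under left multiplication. -/
def IsTwoSidedRid {R : Type u} [Ring R] (A : Submodule Rᵐᵒᵖ R) : Prop :=
  ∀ (r : R), ∀ x ∈ A, r * x ∈ A

/-- A serial factorization of a right ideal `A`: a factorization `A = A₁⋯Aₙ` into proper
right ideals that pairwise commute, form a coindependent family, and are such that every
quotient `R/Aᵢ` is a uniserial right `R`-module. -/
def IsSerialFact {R : Type u} [Ring R] {n : ℕ} (A : Submodule Rᵐᵒᵖ R)
    (F : Fin n → Submodule Rᵐᵒᵖ R) : Prop :=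
  (∀ i, F i ≠ ⊤) ∧ (∀ i j, rmul (F i) (F j) = rmul (F j) (F i)) ∧ Coindep F ∧
    (∀ i, IsUniserialMod Rᵐᵒᵖ (R ⧸ F i)) ∧ A = rprod (List.ofFn F)

/-- A right ideal has a serial factorization if it admits one of some length. -/
def HasSerialFact {R : Type u} [Ring R] (A : Submodule Rᵐᵒᵖ R) : Prop :=
  ∃ (n : ℕ) (F : Fin n → Submodule Rᵐᵒᵖ R), IsSerialFact A F

/-- A right chain ring: its right ideals are linearly ordered by inclusion. -/
def IsRightChainRing (R : Type u) [Ring R] : Prop :=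
  ∀ A B : Submodule Rᵐᵒᵖ R, A ≤ B ∨ B ≤ A

/-- A ring is right duo if every right ideal is a two-sided ideal. -/
def IsRightDuo (R : Type u) [Ring R] : Prop :=
  ∀ A : Submodule Rᵐᵒᵖ R, IsTwoSidedRid A

/-- The principal right ideal `rR`. -/
def rspan {R : Type u} [Ring R] (r : R) : Submodule Rᵐᵒᵖ R :=
  Submodule.span Rᵐᵒᵖ ({r} : Set R)

section Basic
variable {R : Type u} [Ring R]

lemma mem_rmul {A B : Submodule Rᵐᵒᵖ R} {a b : R} (ha : a ∈ A) (hb : b ∈ B) :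
    a * b ∈ rmul A B :=
  Submodule.subset_span ⟨a, ha, b, hb, rfl⟩

lemma rmul_le {A B C : Submodule Rᵐᵒᵖ R} (h : ∀ a ∈ A, ∀ b ∈ B, a * b ∈ C) :
    rmul A B ≤ C := by
  apply Submodule.span_le.mpr
  rintro x ⟨a, ha, b, hb, rfl⟩
  exact h a ha b hb

lemma mul_mem_right {A : Submodule Rᵐᵒᵖ R} {a : R} (ha : a ∈ A) (b : R) : a * b ∈ A := by
  simpa [op_smul_eq_mul] using A.smul_mem (op b) ha

lemma rmul_le_left {A B : Submodule Rᵐᵒᵖ R} : rmul A B ≤ A :=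
  rmul_le fun a ha b _ => mul_mem_right ha b

lemma rmul_top {A : Submodule Rᵐᵒᵖ R} : rmul A ⊤ = A := by
  refine le_antisymm rmul_le_left (fun a ha => ?_)
  have h1 : (1 : R) ∈ (⊤ : Submodule Rᵐᵒᵖ R) := trivial
  have := mem_rmul ha h1
  rwa [mul_one] at this

lemma rprod_cons {A : Submodule Rᵐᵒᵖ R} {l : List (Submodule Rᵐᵒᵖ R)} :
    rprod (A :: l) = rmul A (rprod l) := by
  cases l with
  | nil => show A = rmul A ⊤; rw [rmul_top]
  | cons B t => rfl

/-- Induction principle for membership in `rmul`. -/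
lemma rmul_induction {A B : Submodule Rᵐᵒᵖ R} {p : R → Prop} {x : R} (hx : x ∈ rmul A B)
    (hgen : ∀ a ∈ A, ∀ b ∈ B, p (a * b)) (h0 : p 0)
    (hadd : ∀ x y, p x → p y → p (x + y)) (hneg : ∀ x, p x → p (-x)) : p x := by
  set S : Set R := {x : R | ∃ a ∈ A, ∃ b ∈ B, x = a * b} with hS
  have hcl : ∀ y ∈ AddSubgroup.closure S, ∀ r : R, y * r ∈ AddSubgroup.closure S := by
    intro y hy
    induction hy using AddSubgroup.closure_induction with
    | mem z hz =>
      intro r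
      obtain ⟨a, ha, b, hb, rfl⟩ := hz
      exact AddSubgroup.subset_closure ⟨a, ha, b * r, mul_mem_right hb r, mul_assoc a b r⟩
    | zero => intro r; simpa using (AddSubgroup.closure S).zero_mem
    | add z w hz hw ihz ihw => intro r; simpa [add_mul] using
        (AddSubgroup.closure S).add_mem (ihz r) (ihw r)
    | neg z hz ihz => intro r; simpa [neg_mul] using (AddSubgroup.closure S).neg_mem (ihz r)
  let W : Submodule Rᵐᵒᵖ R :=
    { carrier := AddSubgroup.closure S
      add_mem' := fun h1 h2 => (AddSubgroup.closure S).add_mem h1 h2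
      zero_mem' := (AddSubgroup.closure S).zero_mem
      smul_mem' := fun r x hx => hcl x hx r.unop }
  have hW : rmul A B ≤ W := Submodule.span_le.mpr AddSubgroup.subset_closure
  have hx' : x ∈ AddSubgroup.closure S := hW hx
  clear hx
  induction hx' using AddSubgroup.closure_induction with
  | mem z hz => obtain ⟨a, ha, b, hb, rfl⟩ := hz; exact hgen a ha b hb
  | zero => exact h0
  | add z w hz hw ihz ihw => exact hadd z w ihz ihw
  | neg z hz ihz => exact hneg z ihz

lemma rmul_assoc {A B C : Submodule Rᵐᵒᵖ R} :
    rmul (rmul A B) C = rmul A (rmul B C) := by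
  apply le_antisymm
  · refine rmul_le (fun x hx c hc => ?_)
    refine rmul_induction (p := fun y => y * c ∈ rmul A (rmul B C)) hx
      (fun a ha b hb => ?_) (by simp) (fun y z hy hz => by simpa [add_mul] using add_mem hy hz)
      (fun y hy => by simpa [neg_mul] using neg_mem hy)
    show a * b * c ∈ rmul A (rmul B C)
    rw [mul_assoc]
    exact mem_rmul ha (mem_rmul hb hc)
  · refine rmul_le (fun a ha x hx => ?_)
    refine rmul_induction (p := fun y => a * y ∈ rmul (rmul A B) C) hx
      (fun b hb c hc => ?_) (by simp) (fun y z hy hz => by simpa [mul_add] using add_mem hy hz)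
      (fun y hy => by simpa [mul_neg] using neg_mem hy)
    show a * (b * c) ∈ rmul (rmul A B) C
    rw [← mul_assoc]
    exact mem_rmul (mem_rmul ha hb) hc

lemma rmul_top_left {A : Submodule Rᵐᵒᵖ R} (hA : IsTwoSidedRid A) : rmul ⊤ A = A := by
  refine le_antisymm (rmul_le (fun t _ a ha => hA t a ha)) (fun a ha => ?_)
  have h1 : (1 : R) ∈ (⊤ : Submodule Rᵐᵒᵖ R) := trivial
  have := mem_rmul h1 ha
  rwa [one_mul] at this

lemma rmul_prod_comm {A : Submodule Rᵐᵒᵖ R} (hA : IsTwoSidedRid A) {l : List (Submodule Rᵐᵒᵖ R)}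
    (h : ∀ X ∈ l, rmul A X = rmul X A) : rmul A (rprod l) = rmul (rprod l) A := by
  induction l with
  | nil => show rmul A ⊤ = rmul ⊤ A; rw [rmul_top, rmul_top_left hA]
  | cons B t ih =>
    rw [rprod_cons, ← rmul_assoc, h B List.mem_cons_self, rmul_assoc,
      ih (fun X hX => h X (List.mem_cons_of_mem B hX)), ← rmul_assoc]

/-- Inf of a list of submodules. -/
def infList (l : List (Submodule Rᵐᵒᵖ R)) : Submodule Rᵐᵒᵖ R := l.foldr (· ⊓ ·) ⊤

lemma mem_infList {l : List (Submodule Rᵐᵒᵖ R)} {x : R} :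
    x ∈ infList l ↔ ∀ X ∈ l, x ∈ X := by
  induction l with
  | nil => simp [infList]
  | cons B t ih =>
    show x ∈ B ⊓ infList t ↔ _
    rw [Submodule.mem_inf, ih]
    simp

lemma infList_twoSided {l : List (Submodule Rᵐᵒᵖ R)} (h : ∀ X ∈ l, IsTwoSidedRid X) :
    IsTwoSidedRid (infList l) := by
  intro r x hx
  rw [mem_infList] at hx ⊢
  exact fun X hX => h X hX r x (hx X hX)

lemma sup_eq_top_of_one_mem {A B : Submodule Rᵐᵒᵖ R} (h : (1 : R) ∈ A ⊔ B) : A ⊔ B = ⊤ := by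
  rw [eq_top_iff]
  intro r _
  have := (A ⊔ B).smul_mem (op r) h
  rwa [op_smul_eq_mul, one_mul] at this

lemma sup_infList_eq_top {A : Submodule Rᵐᵒᵖ R} {l : List (Submodule Rᵐᵒᵖ R)}
    (hA : IsTwoSidedRid A) (h2 : ∀ X ∈ l, IsTwoSidedRid X) (hc : ∀ X ∈ l, A ⊔ X = ⊤) :
    A ⊔ infList l = ⊤ := by
  induction l with
  | nil => simp [infList]
  | cons X t ih =>
    have hAX : A ⊔ X = ⊤ := hc X List.mem_cons_self
    have hAt : A ⊔ infList t = ⊤ :=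
      ih (fun Y hY => h2 Y (List.mem_cons_of_mem X hY)) (fun Y hY => hc Y (List.mem_cons_of_mem X hY))
    apply sup_eq_top_of_one_mem
    obtain ⟨a₁, ha₁, x, hx, hx1⟩ := Submodule.mem_sup.mp (hAX ▸ Submodule.mem_top : (1:R) ∈ A ⊔ X)
    obtain ⟨a₂, ha₂, d, hd, hd1⟩ := Submodule.mem_sup.mp (hAt ▸ Submodule.mem_top : (1:R) ∈ A ⊔ infList t)
    refine Submodule.mem_sup.mpr ⟨a₁ + x * a₂, add_mem ha₁ (hA x a₂ ha₂), x * d, ?_, ?_⟩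
    · have h1 : x * d ∈ X := mul_mem_right hx d
      have h2' : x * d ∈ infList t := infList_twoSided (fun Y hY => h2 Y (List.mem_cons_of_mem X hY)) x d hd
      show x * d ∈ X ⊓ infList t
      exact ⟨h1, h2'⟩
    · calc a₁ + x * a₂ + x * d = a₁ + x * (a₂ + d) := by noncomm_ring
      _ = a₁ + x * 1 := by rw [hd1]
      _ = 1 := by rw [mul_one, hx1]

lemma rprod_eq_infList {l : List (Submodule Rᵐᵒᵖ R)} (h1 : ∀ X ∈ l, IsTwoSidedRid X)
    (h2 : List.Pairwise (fun X Y => rmul X Y = rmul Y X) l)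
    (h3 : List.Pairwise (fun X Y => X ⊔ Y = ⊤) l) : rprod l = infList l := by
  induction l with
  | nil => rfl
  | cons B t ih =>
    have hB : IsTwoSidedRid B := h1 B List.mem_cons_self
    have h1t : ∀ X ∈ t, IsTwoSidedRid X := fun X hX => h1 X (List.mem_cons_of_mem B hX)
    have hcommB : ∀ X ∈ t, rmul B X = rmul X B := (List.pairwise_cons.mp h2).1
    have hcB : ∀ X ∈ t, B ⊔ X = ⊤ := (List.pairwise_cons.mp h3).1
    have iht : rprod t = infList t := ih h1t (List.pairwise_cons.mp h2).2 (List.pairwise_cons.mp h3).2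
    have hIt2 : IsTwoSidedRid (infList t) := infList_twoSided h1t
    rw [rprod_cons, iht]
    show rmul B (infList t) = B ⊓ infList t
    apply le_antisymm
    · exact le_inf rmul_le_left (rmul_le fun b hb y hy => hIt2 b y hy)
    · rintro x ⟨hxB, hxI⟩
      have htop : B ⊔ infList t = ⊤ := sup_infList_eq_top hB h1t hcB
      obtain ⟨b, hb, d, hd, hbd⟩ := Submodule.mem_sup.mp (htop ▸ Submodule.mem_top : (1:R) ∈ B ⊔ infList t)
      have h1' : b * x ∈ rmul B (infList t) := mem_rmul hb hxI
      have h2' : d * x ∈ rmul (infList t) B := mem_rmul hd hxB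
      rw [← iht, ← rmul_prod_comm hB hcommB, iht] at h2'
      have : b * x + d * x = x := by rw [← add_mul, hbd, one_mul]
      rw [← this]
      exact add_mem h1' h2'


lemma coindep_partition {n : ℕ} {F : Fin n → Submodule Rᵐᵒᵖ R} (hco : Coindep F)
    (s : Finset (Fin n)) :
    (⨅ i ∈ s, F i) ⊔ (⨅ i ∈ sᶜ, F i) = ⊤ := by
  classical
  induction s using Finset.induction_on with
  | empty => simp
  | @insert i s hi ih =>
    set X := ⨅ j ∈ s, F j with hX
    set Y := ⨅ j ∈ (insert i s)ᶜ, F j with hY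
    have hsc : (⨅ j ∈ sᶜ, F j) = F i ⊓ Y := by
      have : sᶜ = insert i (insert i s)ᶜ := by
        ext j
        by_cases hji : j = i
        · subst hji; simp [hi]
        · simp [hji]
      rw [this, Finset.iInf_insert]
    rw [hsc] at ih
    have hni : (⨅ j, ⨅ (_ : j ≠ i), F j) ≤ X ⊓ Y := by
      refine le_inf ?_ ?_
      · refine le_iInf fun j => le_iInf fun hj => ?_
        refine iInf_le_of_le j (iInf_le _ ?_)
        rintro rfl
        exact hi hj
      · refine le_iInf fun j => le_iInf fun hj => ?_
        have hji : j ≠ i := by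
          simp [Finset.mem_compl, Finset.mem_insert] at hj
          exact hj.1
        exact iInf_le_of_le j (iInf_le _ hji)
    have hcoi : F i ⊔ (X ⊓ Y) = ⊤ := by
      rw [eq_top_iff, ← hco i]
      exact sup_le_sup_left hni _
    have hmod : F i ⊓ X ⊔ (F i ⊓ Y) = F i ⊓ (X ⊔ F i ⊓ Y) :=
      inf_sup_assoc_of_le _ inf_le_left
    have hFi : F i ≤ (F i ⊓ X) ⊔ (F i ⊓ Y) := by
      rw [hmod, ih, inf_top_eq]
    rw [Finset.iInf_insert]
    rw [eq_top_iff, ← hcoi]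
    refine sup_le ?_ (le_sup_of_le_right inf_le_right)
    calc F i ≤ (F i ⊓ X) ⊔ (F i ⊓ Y) := hFi
      _ ≤ (F i ⊓ X) ⊔ Y := sup_le_sup_left inf_le_right _

lemma dist2 {A B C : Submodule Rᵐᵒᵖ R} (hA : IsTwoSidedRid A) (hB : IsTwoSidedRid B)
    (hc : A ⊔ B = ⊤) : (C ⊔ A) ⊓ (C ⊔ B) ≤ C ⊔ (A ⊓ B) := by
  rintro x ⟨hx1, hx2⟩
  obtain ⟨c₁, hc₁, a₁, ha₁, h1⟩ := Submodule.mem_sup.mp hx1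
  obtain ⟨c₂, hc₂, a₂, ha₂, h2⟩ := Submodule.mem_sup.mp hx2
  obtain ⟨u, hu, v, hv, huv⟩ := Submodule.mem_sup.mp (hc ▸ Submodule.mem_top : (1:R) ∈ A ⊔ B)
  refine Submodule.mem_sup.mpr ⟨c₂ * u + c₁ * v, add_mem (mul_mem_right hc₂ u) (mul_mem_right hc₁ v),
    x - (c₂ * u + c₁ * v), ⟨?_, ?_⟩, by abel⟩
  · have e1 : x - (c₂ * u + c₁ * v) = (a₂ - a₁) * u + a₁ := by
      have hv' : v = 1 - u := eq_sub_of_add_eq' huv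
      have hc1' : c₁ = x - a₁ := eq_sub_of_add_eq h1
      have hc2' : c₂ = x - a₂ := eq_sub_of_add_eq h2
      rw [hv', hc1', hc2']; noncomm_ring
    rw [e1]
    exact add_mem (hA _ u hu) ha₁
  · have e2 : x - (c₂ * u + c₁ * v) = (a₁ - a₂) * v + a₂ := by
      have hu' : u = 1 - v := eq_sub_of_add_eq huv
      have hc1' : c₁ = x - a₁ := eq_sub_of_add_eq h1
      have hc2' : c₂ = x - a₂ := eq_sub_of_add_eq h2
      rw [hu', hc1', hc2']; noncomm_ring
    rw [e2]
    exact add_mem (hB _ v hv) ha₂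

lemma biInf_twoSided {n : ℕ} {F : Fin n → Submodule Rᵐᵒᵖ R} (htwo : ∀ i, IsTwoSidedRid (F i))
    (s : Finset (Fin n)) : IsTwoSidedRid (⨅ i ∈ s, F i) := by
  intro r x hx
  simp only [Submodule.mem_iInf] at hx ⊢
  exact fun i hi => htwo i r x (hx i hi)

lemma distn {n : ℕ} {F : Fin n → Submodule Rᵐᵒᵖ R} (htwo : ∀ i, IsTwoSidedRid (F i))
    (hco : Coindep F) {C : Submodule Rᵐᵒᵖ R} {x : R} (hx : ∀ i, x ∈ C ⊔ F i) :
    x ∈ C ⊔ ⨅ i, F i := by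
  classical
  have key : ∀ s : Finset (Fin n), x ∈ C ⊔ ⨅ i ∈ s, F i := by
    intro s
    induction s using Finset.induction_on with
    | empty => simp
    | @insert i s hi ih =>
      have hcomax : F i ⊔ (⨅ j ∈ s, F j) = ⊤ := by
        rw [eq_top_iff, ← hco i]
        refine sup_le_sup_left ?_ _
        refine le_iInf fun j => le_iInf fun hj => ?_
        refine iInf_le_of_le j (iInf_le _ ?_)
        rintro rfl
        exact hi hj
      have hdist := dist2 (C := C) (htwo i) (biInf_twoSided htwo s) hcomax
      rw [Finset.iInf_insert]
      exact hdist ⟨hx i, ih⟩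
  have := key Finset.univ
  simpa using this

lemma twoSided_of_fact {n : ℕ} {F : Fin n → Submodule Rᵐᵒᵖ R} (hn : 2 ≤ n)
    (hcomm : ∀ i j, rmul (F i) (F j) = rmul (F j) (F i)) (hco : Coindep F) (i : Fin n) :
    IsTwoSidedRid (F i) := by
  intro r x hx
  have h1 : r ∈ F i ⊔ ⨅ j, ⨅ (_ : j ≠ i), F j := (hco i) ▸ Submodule.mem_top
  obtain ⟨a, ha, c, hcmem, hac⟩ := Submodule.mem_sup.mp h1
  have : Nontrivial (Fin n) := Fin.nontrivial_iff_two_le.mpr hn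
  obtain ⟨j, hj⟩ := exists_ne i
  have hcj : c ∈ F j := by
    simp only [Submodule.mem_iInf] at hcmem
    exact hcmem j hj
  have h2 : c * x ∈ rmul (F j) (F i) := mem_rmul hcj hx
  rw [hcomm j i] at h2
  have h3 : c * x ∈ F i := rmul_le_left h2
  have h4 : a * x ∈ F i := mul_mem_right ha x
  have h5 : r * x = a * x + c * x := by rw [← hac, add_mul]
  rw [h5]
  exact add_mem h4 h3

lemma quot_compare {A : Submodule Rᵐᵒᵖ R} (hu : IsUniserialMod Rᵐᵒᵖ (R ⧸ A))
    (P Q : Submodule Rᵐᵒᵖ R) (hP : A ≤ P) (hQ : A ≤ Q) : P ≤ Q ∨ Q ≤ P := by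
  rcases hu (P.map A.mkQ) (Q.map A.mkQ) with h | h
  · left
    have h2 := Submodule.comap_mono (f := A.mkQ) h
    rwa [Submodule.comap_map_eq, Submodule.comap_map_eq, Submodule.ker_mkQ,
      sup_eq_left.mpr hP, sup_eq_left.mpr hQ] at h2
  · right
    have h2 := Submodule.comap_mono (f := A.mkQ) h
    rwa [Submodule.comap_map_eq, Submodule.comap_map_eq, Submodule.ker_mkQ,
      sup_eq_left.mpr hP, sup_eq_left.mpr hQ] at h2

lemma span_finset_cyclic {S : Type*} [Ring S] {M : Type*} [AddCommGroup M] [Module S M]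
    (hu : IsUniserialMod S M) (s : Finset M) :
    ∃ x, Submodule.span S (↑s : Set M) = Submodule.span S {x} := by
  classical
  induction s using Finset.induction_on with
  | empty => exact ⟨0, by simp⟩
  | @insert a s ha ih =>
    obtain ⟨x, hx⟩ := ih
    refine ?_
    rw [Finset.coe_insert, Submodule.span_insert, hx]
    rcases hu (Submodule.span S {a}) (Submodule.span S {x}) with h | h
    · exact ⟨x, sup_eq_right.mpr h⟩
    · exact ⟨a, sup_eq_left.mpr h⟩

lemma mem_rspan_self (b : R) : b ∈ rspan b := Submodule.mem_span_singleton_self b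

lemma combine {n : ℕ} {F : Fin n → Submodule Rᵐᵒᵖ R} {A : Submodule Rᵐᵒᵖ R}
    (htwo : ∀ i, IsTwoSidedRid (F i)) (hco : Coindep F)
    (huni : ∀ i, IsUniserialMod Rᵐᵒᵖ (R ⧸ F i)) (hinf : (⨅ i, F i) ≤ A)
    (b₁ b₂ : R) : ∃ b : R, A ⊔ (rspan b₁ ⊔ rspan b₂) = A ⊔ rspan b := by
  classical
  set s : Finset (Fin n) := Finset.univ.filter (fun i => rspan b₂ ⊔ F i ≤ rspan b₁ ⊔ F i) with hs
  have huv := coindep_partition hco s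
  obtain ⟨u, hu, e, he, hue⟩ :=
    Submodule.mem_sup.mp (huv ▸ Submodule.mem_top : (1:R) ∈ (⨅ i ∈ s, F i) ⊔ ⨅ i ∈ sᶜ, F i)
  simp only [Submodule.mem_iInf] at hu he
  have hu' : ∀ i ∈ s, u ∈ F i := fun i hi => hu i hi
  have he' : ∀ i ∉ s, e ∈ F i := fun i hi => he i (Finset.mem_compl.mpr hi)
  set b := b₁ * e + b₂ * u with hb
  have hsub1 : ∀ i ∈ s, b - b₁ ∈ F i := by
    intro i hi
    have : b - b₁ = (b₂ - b₁) * u := by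
      have : e = 1 - u := eq_sub_of_add_eq' hue
      rw [hb, this]; noncomm_ring
    rw [this]
    exact htwo i _ u (hu' i hi)
  have hsub2 : ∀ i ∉ s, b - b₂ ∈ F i := by
    intro i hi
    have : b - b₂ = (b₁ - b₂) * e := by
      have : u = 1 - e := eq_sub_of_add_eq hue
      rw [hb, this]; noncomm_ring
    rw [this]
    exact htwo i _ e (he' i hi)
  -- membership claims
  have hmem1s : ∀ i ∈ s, b₁ ∈ rspan b ⊔ F i := fun i hi =>
    Submodule.mem_sup.mpr ⟨b, mem_rspan_self b, b₁ - b, (neg_sub b b₁) ▸ neg_mem (hsub1 i hi), by abel⟩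
  have hmem2c : ∀ i ∉ s, b₂ ∈ rspan b ⊔ F i := fun i hi =>
    Submodule.mem_sup.mpr ⟨b, mem_rspan_self b, b₂ - b, (neg_sub b b₂) ▸ neg_mem (hsub2 i hi), by abel⟩
  have hmem1 : ∀ i, b₁ ∈ rspan b ⊔ F i := by
    intro i
    by_cases hi : i ∈ s
    · exact hmem1s i hi
    · have hnot : ¬(rspan b₂ ⊔ F i ≤ rspan b₁ ⊔ F i) := by
        intro h
        exact hi (Finset.mem_filter.mpr ⟨Finset.mem_univ i, h⟩)
      have hcmp := quot_compare (huni i) (rspan b₁ ⊔ F i) (rspan b₂ ⊔ F i) le_sup_right le_sup_right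
      have hPQ : rspan b₁ ⊔ F i ≤ rspan b₂ ⊔ F i := by
        rcases hcmp with h | h
        · exact h
        · exact absurd h hnot
      have hb1Q : b₁ ∈ rspan b₂ ⊔ F i := hPQ (le_sup_left (a := rspan b₁) (b := F i) (mem_rspan_self b₁))
      have hQle : rspan b₂ ⊔ F i ≤ rspan b ⊔ F i := by
        refine sup_le ?_ le_sup_right
        refine (Submodule.span_singleton_le_iff_mem _ _).mpr (hmem2c i hi)
      exact hQle hb1Q
  have hmem2 : ∀ i, b₂ ∈ rspan b ⊔ F i := by
    intro i
    by_cases hi : i ∈ s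
    · have hQP : rspan b₂ ⊔ F i ≤ rspan b₁ ⊔ F i := (Finset.mem_filter.mp hi).2
      have hb2P : b₂ ∈ rspan b₁ ⊔ F i := hQP (le_sup_left (a := rspan b₂) (b := F i) (mem_rspan_self b₂))
      have hPle : rspan b₁ ⊔ F i ≤ rspan b ⊔ F i := by
        refine sup_le ?_ le_sup_right
        exact (Submodule.span_singleton_le_iff_mem _ _).mpr (hmem1s i hi)
      exact hPle hb2P
    · exact hmem2c i hi
  have hb1A : b₁ ∈ A ⊔ rspan b := by
    have := distn htwo hco (C := rspan b) hmem1
    rw [sup_comm]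
    exact sup_le_sup_left hinf _ this
  have hb2A : b₂ ∈ A ⊔ rspan b := by
    have := distn htwo hco (C := rspan b) hmem2
    rw [sup_comm]
    exact sup_le_sup_left hinf _ this
  have hbmem : b ∈ rspan b₁ ⊔ rspan b₂ := by
    have h1 : b₁ * e ∈ rspan b₁ := mul_mem_right (mem_rspan_self b₁) e
    have h2 : b₂ * u ∈ rspan b₂ := mul_mem_right (mem_rspan_self b₂) u
    exact Submodule.mem_sup.mpr ⟨b₁ * e, h1, b₂ * u, h2, rfl⟩
  refine ⟨b, le_antisymm ?_ ?_⟩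
  · refine sup_le le_sup_left (sup_le ?_ ?_)
    · exact (Submodule.span_singleton_le_iff_mem _ _).mpr hb1A
    · exact (Submodule.span_singleton_le_iff_mem _ _).mpr hb2A
  · refine sup_le le_sup_left ?_
    refine (Submodule.span_singleton_le_iff_mem _ _).mpr ?_
    have h1 : b ∈ A ⊔ (rspan b₁ ⊔ rspan b₂) := le_sup_right (a := A) hbmem
    exact h1

lemma pairwise_comax {n : ℕ} {F : Fin n → Submodule Rᵐᵒᵖ R} (hco : Coindep F)
    {i j : Fin n} (hij : i ≠ j) : F i ⊔ F j = ⊤ := by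
  rw [eq_top_iff, ← hco i]
  refine sup_le_sup_left ?_ _
  exact iInf_le_of_le j (iInf_le _ hij.symm)

lemma infList_ofFn_eq {n : ℕ} {F : Fin n → Submodule Rᵐᵒᵖ R} :
    infList (List.ofFn F) = ⨅ i, F i := by
  ext x
  rw [mem_infList, Submodule.mem_iInf]
  constructor
  · exact fun h i => h (F i) (List.mem_ofFn.mpr ⟨i, rfl⟩)
  · rintro h X hX
    obtain ⟨i, rfl⟩ := List.mem_ofFn.mp hX
    exact h i

lemma map_mkQ_self_eq_bot {A : Submodule Rᵐᵒᵖ R} : A.map A.mkQ = ⊥ := by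
  rw [eq_bot_iff, Submodule.map_le_iff_le_comap]
  intro x hx
  simp [Submodule.mem_comap, Submodule.ker_mkQ] at *
  exact hx

/-- Main case `n ≥ 2`. -/
lemma main_case {n : ℕ} {F : Fin n → Submodule Rᵐᵒᵖ R} {A : Submodule Rᵐᵒᵖ R} (hn : 2 ≤ n)
    (hcomm : ∀ i j, rmul (F i) (F j) = rmul (F j) (F i)) (hco : Coindep F)
    (huni : ∀ i, IsUniserialMod Rᵐᵒᵖ (R ⧸ F i)) (hAeq : A = rprod (List.ofFn F)) :
    ∀ N : Submodule Rᵐᵒᵖ (R ⧸ A), N.FG → ∃ x : R ⧸ A, N = Submodule.span Rᵐᵒᵖ {x} := by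
  intro N hN
  have htwo : ∀ i, IsTwoSidedRid (F i) := twoSided_of_fact hn hcomm hco
  have hl1 : ∀ X ∈ List.ofFn F, IsTwoSidedRid X := by
    rintro X hX
    obtain ⟨i, rfl⟩ := List.mem_ofFn.mp hX
    exact htwo i
  have hp2 : List.Pairwise (fun X Y => rmul X Y = rmul Y X) (List.ofFn F) :=
    List.pairwise_ofFn.mpr (fun i j _ => hcomm i j)
  have hp3 : List.Pairwise (fun X Y => X ⊔ Y = ⊤) (List.ofFn F) :=
    List.pairwise_ofFn.mpr (fun i j hij => pairwise_comax hco (Fin.ne_of_lt hij))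
  have hAinf : (⨅ i, F i) ≤ A := by
    rw [hAeq, rprod_eq_infList hl1 hp2 hp3, infList_ofFn_eq]
  have key : ∀ c : R, Submodule.span Rᵐᵒᵖ {(Submodule.Quotient.mk c : R ⧸ A)} =
      (rspan c).map A.mkQ := by
    intro c
    rw [rspan, Submodule.map_span, Set.image_singleton, Submodule.mkQ_apply]
  classical
  obtain ⟨t, ht⟩ := hN
  rw [← ht]
  clear ht
  induction t using Finset.induction_on with
  | empty => exact ⟨0, by simp⟩
  | @insert a t ha ih =>
    obtain ⟨y, hy⟩ := ih
    rw [Finset.coe_insert, Submodule.span_insert, hy]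
    obtain ⟨b₁, rfl⟩ := Submodule.Quotient.mk_surjective A a
    obtain ⟨b₂, rfl⟩ := Submodule.Quotient.mk_surjective A y
    obtain ⟨b, hb⟩ := combine htwo hco huni hAinf b₁ b₂
    refine ⟨Submodule.Quotient.mk b, ?_⟩
    calc Submodule.span Rᵐᵒᵖ {(Submodule.Quotient.mk b₁ : R ⧸ A)} ⊔
          Submodule.span Rᵐᵒᵖ {(Submodule.Quotient.mk b₂ : R ⧸ A)}
        = (rspan b₁).map A.mkQ ⊔ (rspan b₂).map A.mkQ := by rw [key, key]
      _ = (rspan b₁ ⊔ rspan b₂).map A.mkQ := (Submodule.map_sup _ _ _).symm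
      _ = A.map A.mkQ ⊔ (rspan b₁ ⊔ rspan b₂).map A.mkQ := by
          rw [map_mkQ_self_eq_bot, bot_sup_eq]
      _ = (A ⊔ (rspan b₁ ⊔ rspan b₂)).map A.mkQ := (Submodule.map_sup _ _ _).symm
      _ = (A ⊔ rspan b).map A.mkQ := by rw [hb]
      _ = A.map A.mkQ ⊔ (rspan b).map A.mkQ := Submodule.map_sup _ _ _
      _ = (rspan b).map A.mkQ := by rw [map_mkQ_self_eq_bot, bot_sup_eq]
      _ = Submodule.span Rᵐᵒᵖ {(Submodule.Quotient.mk b : R ⧸ A)} := (key b).symm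

theorem bezout_of_hasSerialFact {R' : Type u} [Ring R']
    (A : Submodule R'ᵐᵒᵖ R') (hA : HasSerialFact A) :
    ∀ N : Submodule R'ᵐᵒᵖ (R' ⧸ A), N.FG → ∃ x : R' ⧸ A, N = Submodule.span R'ᵐᵒᵖ {x} := by
  intro N hN
  obtain ⟨n, F, hne, hcomm, hco, huni, hAeq⟩ := hA
  match n, F, hne, hcomm, hco, huni, hAeq with
  | 0, F, _, _, _, _, hAeq =>
    have hA' : A = ⊤ := by rw [hAeq, List.ofFn_zero]; rfl
    subst hA'
    refine ⟨0, ?_⟩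
    rw [Submodule.span_zero_singleton, eq_bot_iff]
    intro x _
    obtain ⟨r, rfl⟩ := Submodule.Quotient.mk_surjective _ x
    rw [Submodule.mem_bot, Submodule.Quotient.mk_eq_zero]
    trivial
  | 1, F, _, _, _, huni, hAeq =>
    have hA' : A = F 0 := by
      rw [hAeq]
      have : List.ofFn F = [F 0] := by
        rw [List.ofFn_succ, List.ofFn_zero]
      rw [this]
      rfl
    subst hA'
    obtain ⟨t, ht⟩ := hN
    obtain ⟨x, hx⟩ := span_finset_cyclic (huni 0) t
    exact ⟨x, by rw [← ht, hx]⟩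
  | (m+2), F, _, hcomm, hco, huni, hAeq =>
    exact main_case (by omega) hcomm hco huni hAeq N hN

end Basic


/-- Proposition 3.5: if a right ideal `A` has a serial factorization, then `R/A` is a Bézout
right `R`-module: every finitely generated submodule is cyclic. -/
theorem statement14 {R : Type u} [Ring R] [Nontrivial R]
    (A : Submodule Rᵐᵒᵖ R) (hA : HasSerialFact A) :
    ∀ N : Submodule Rᵐᵒᵖ (R ⧸ A), N.FG → ∃ x : R ⧸ A, N = Submodule.span Rᵐᵒᵖ {x} :=
  bezout_of_hasSerialFact A hA
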